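/- arXiv:2210.10117 — 3 statements merged into one kernel-verified Lean document; each statement's English description precedes it below -/
import Mathlib

section
/- Suppose T > 0 satisfies λ₀ − (T²/2)·c_Φ⁻ − T·c_Ψ⁻ > 0 and fix q ∈ ℝ^d. If r⁰ and r¹ are C¹ paths on [0,T] with r⁰(T) = r¹(T) = q, each of which minimizes B₀^T among all C¹ paths r : [0,T] → ℝ^d with r(T) = q, then r⁰(s) = r¹(s) for every s ∈ [0,T]. -/
open MeasureTheory Set
open scoped RealInnerProductSpace

section Helpers

lemma aux_mono (f : ℝ → ℝ) (hf2 : Differentiable ℝ (deriv f))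
    (m : ℝ) (hm : ∀ ε : ℝ, m ≤ deriv (deriv f) ε) :
    ∀ a b : ℝ, a ≤ b → deriv f a + m * (b - a) ≤ deriv f b := by
  intro a b hab
  have hmono : Monotone (fun x => deriv f x - m * x) := by
    apply monotone_of_deriv_nonneg
    · exact hf2.sub (differentiable_id.const_mul m)
    · intro x
      have hd : HasDerivAt (fun x => deriv f x - m * x)
          (deriv (deriv f) x - m * 1) x :=
        ((hf2 x).hasDerivAt).sub ((hasDerivAt_id x).const_mul m)
      rw [hd.deriv]
      have := hm x; linarith
  have := hmono hab
  simp only at this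
  nlinarith

lemma midpoint_gap (f : ℝ → ℝ) (hf : ContDiff ℝ 2 f) (m : ℝ)
    (hm : ∀ ε : ℝ, m ≤ iteratedDeriv 2 f ε) :
    m / 4 ≤ f 0 + f 1 - 2 * f (1/2) := by
  have hf1 : Differentiable ℝ f := hf.differentiable (by norm_num)
  have hf2 : Differentiable ℝ (deriv f) := by
    have h := (contDiff_succ_iff_deriv.mp (by exact_mod_cast hf : ContDiff ℝ ((1:ℕ)+1) f)).2
    exact h.2.differentiable (by norm_num)
  have hm' : ∀ ε : ℝ, m ≤ deriv (deriv f) ε := by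
    intro ε
    have := hm ε
    rwa [iteratedDeriv_succ, iteratedDeriv_one] at this
  have key := aux_mono f hf2 m hm'
  have hψd : ∀ t : ℝ, HasDerivAt (fun t : ℝ => f (1/2 + t) + f (1/2 - t) - m * t^2)
      (deriv f (1/2 + t) + deriv f (1/2 - t) * (-1) - m * (2 * t)) t := by
    intro t
    have h1 : HasDerivAt (fun t : ℝ => f (1/2 + t)) (deriv f (1/2 + t) * 1) t :=
      (hf1 _).hasDerivAt.comp t ((hasDerivAt_id t).const_add (1/2))
    have h2 : HasDerivAt (fun t : ℝ => f (1/2 - t)) (deriv f (1/2 - t) * (-1)) t :=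
      (hf1 _).hasDerivAt.comp t ((hasDerivAt_id t).const_sub (1/2))
    have h3 : HasDerivAt (fun t : ℝ => m * t^2) (m * (2 * t)) t := by
      simpa using (hasDerivAt_pow 2 t).const_mul m
    have := (h1.add h2).sub h3
    exact this.congr_deriv (by ring)
  have hmono : MonotoneOn (fun t : ℝ => f (1/2 + t) + f (1/2 - t) - m * t^2) (Icc 0 (1/2)) := by
    apply monotoneOn_of_deriv_nonneg (convex_Icc _ _)
    · exact fun x _ => ((hψd x).differentiableAt.continuousAt).continuousWithinAt
    · intro x hx
      exact ((hψd x).differentiableAt).differentiableWithinAt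
    · intro x hx
      rw [interior_Icc] at hx
      rw [(hψd x).deriv]
      have := key (1/2 - x) (1/2 + x) (by linarith [hx.1.le])
      nlinarith [hx.1]
  have h := hmono (by norm_num : (0:ℝ) ∈ Icc 0 (1/2))
    (by norm_num : (1/2:ℝ) ∈ Icc 0 (1/2)) (by norm_num)
  norm_num at h
  linarith

lemma line_iteratedDeriv_two {E : Type*} [NormedAddCommGroup E] [NormedSpace ℝ E]
    (Φ : E → ℝ) (hΦ : ContDiff ℝ 2 Φ) (a h : E) (ε : ℝ) :
    iteratedDeriv 2 (fun e : ℝ => Φ (a + e • h)) ε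
      = iteratedFDeriv ℝ 2 Φ (a + ε • h) ![h, h] := by
  have hΦ1 : Differentiable ℝ Φ := hΦ.differentiable two_ne_zero
  have hdΦ : Differentiable ℝ (fderiv ℝ Φ) := by
    have h2 := (contDiff_succ_iff_fderiv.mp
      (by exact_mod_cast hΦ : ContDiff ℝ ((1:ℕ)+1) Φ)).2
    exact h2.2.differentiable (by norm_num)
  have hℓ : ∀ e : ℝ, HasDerivAt (fun e : ℝ => a + e • h) h e := by
    intro e
    simpa using ((hasDerivAt_id e).smul_const h).const_add a
  have hd1 : ∀ e : ℝ, HasDerivAt (fun e : ℝ => Φ (a + e • h))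
      (fderiv ℝ Φ (a + e • h) h) e :=
    fun e => ((hΦ1 _).hasFDerivAt).comp_hasDerivAt e (hℓ e)
  have H : HasDerivAt (fun e : ℝ => fderiv ℝ Φ (a + e • h))
      (fderiv ℝ (fderiv ℝ Φ) (a + ε • h) h) ε :=
    ((hdΦ _).hasFDerivAt).comp_hasDerivAt ε (hℓ ε)
  have hd2 : HasDerivAt (fun e : ℝ => (fderiv ℝ Φ (a + e • h)) h)
      ((fderiv ℝ (fderiv ℝ Φ) (a + ε • h) h) h) ε := by
    simpa using H.clm_apply (hasDerivAt_const ε h)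
  rw [iteratedDeriv_succ, iteratedDeriv_one]
  have hde : deriv (fun e : ℝ => Φ (a + e • h)) = fun e => fderiv ℝ Φ (a + e • h) h :=
    funext fun e => (hd1 e).deriv
  rw [hde, hd2.deriv, iteratedFDeriv_two_apply]
  simp

lemma sq_integral_le (g : ℝ → ℝ) (a b : ℝ) (hab : a ≤ b)
    (hg : ContinuousOn g (Icc a b)) (hg0 : ∀ x ∈ Icc a b, 0 ≤ g x) :
    (∫ t in a..b, g t) ^ 2 ≤ (b - a) * ∫ t in a..b, (g t) ^ 2 := by
  have hgi : IntervalIntegrable g volume a b :=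
    (hg.mono (by rw [uIcc_of_le hab])).intervalIntegrable
  have hg2i : IntervalIntegrable (fun t => (g t)^2) volume a b :=
    ((hg.pow 2).mono (by rw [uIcc_of_le hab])).intervalIntegrable
  set A := ∫ t in a..b, g t with hA
  set W := ∫ t in a..b, (g t)^2 with hW
  have hA0 : 0 ≤ A := intervalIntegral.integral_nonneg hab (fun x hx => hg0 x hx)
  have hW0 : 0 ≤ W := intervalIntegral.integral_nonneg hab (fun x hx => sq_nonneg _)
  have hM0 : (0:ℝ) ≤ b - a := by linarith
  have key : ∀ ε : ℝ, 0 < ε → A ≤ (ε * (b - a) + W / ε) / 2 := by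
    intro ε hε
    have hne : ε ≠ 0 := ne_of_gt hε
    have hpt : ∀ x ∈ Icc a b, g x ≤ (ε + (g x)^2 / ε) / 2 := by
      intro x hx
      have h1 : 0 ≤ (g x - ε)^2 := sq_nonneg _
      have h2 : (g x)^2 / ε = (g x)^2 * ε⁻¹ := div_eq_mul_inv _ _
      rw [h2, le_div_iff₀ (by norm_num : (0:ℝ) < 2)]
      have h3 : ε * ε⁻¹ = 1 := mul_inv_cancel₀ hne
      nlinarith [mul_le_mul_of_nonneg_right h1 (le_of_lt (inv_pos.mpr hε))]
    have hmono : A ≤ ∫ t in a..b, (ε + (g t)^2 / ε) / 2 := by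
      apply intervalIntegral.integral_mono_on hab hgi
      · exact ((intervalIntegrable_const.add (hg2i.div_const ε)).div_const 2)
      · exact hpt
    have heq : (∫ t in a..b, (ε + (g t)^2 / ε) / 2) = (ε * (b - a) + W / ε) / 2 := by
      rw [intervalIntegral.integral_div]
      congr 1
      rw [intervalIntegral.integral_add (intervalIntegrable_const) (hg2i.div_const ε),
        intervalIntegral.integral_const, intervalIntegral.integral_div]
      rw [smul_eq_mul]
      ring
    linarith [hmono, heq.le, heq.ge]
  rcases eq_or_lt_of_le hM0 with hM | hM
  · have hab' : a = b := by linarith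
    subst hab'
    simp [hA]
  rcases eq_or_lt_of_le hW0 with hWz | hWp
  · have hAz : A ≤ 0 := by
      by_contra hc
      push_neg at hc
      have := key (A / (b - a)) (by positivity)
      rw [← hWz] at this
      field_simp at this
      nlinarith
    nlinarith
  · have hk := key (Real.sqrt (W / (b - a))) (by positivity)
    have hs : Real.sqrt (W / (b - a)) ^ 2 = W / (b - a) :=
      Real.sq_sqrt (by positivity)
    have hspos : 0 < Real.sqrt (W / (b - a)) := Real.sqrt_pos.mpr (by positivity)
    have hs2 : Real.sqrt (W / (b - a)) ^ 2 * (b - a) = W := by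
      rw [hs]; field_simp
    have hdiv : W / Real.sqrt (W / (b - a)) = Real.sqrt (W / (b - a)) * (b - a) := by
      rw [eq_comm, eq_div_iff (ne_of_gt hspos)]
      nlinarith [hs2]
    rw [hdiv] at hk
    nlinarith [hk, hs2, hA0, hM]

lemma ftc_icc {E : Type*} [NormedAddCommGroup E] [NormedSpace ℝ E] [CompleteSpace E]
    (r : ℝ → E) (T : ℝ) (hT : 0 < T) (hr : ContDiffOn ℝ 1 r (Icc 0 T))
    (s : ℝ) (hs : s ∈ Icc 0 T) :
    ∫ t in s..T, derivWithin r (Icc 0 T) t = r T - r s := by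
  have hv : ContinuousOn (derivWithin r (Icc 0 T)) (Icc 0 T) :=
    hr.continuousOn_derivWithin (uniqueDiffOn_Icc hT) le_rfl
  apply intervalIntegral.integral_eq_sub_of_hasDeriv_right_of_le hs.2
  · exact hr.continuousOn.mono (Icc_subset_Icc hs.1 le_rfl)
  · intro x hx
    have hx' : x ∈ Icc 0 T := ⟨le_trans hs.1 hx.1.le, hx.2.le⟩
    have hd : HasDerivWithinAt r (derivWithin r (Icc 0 T) x) (Icc 0 T) x :=
      ((hr.differentiableOn one_ne_zero) x hx').hasDerivWithinAt
    exact hd.mono_of_mem_nhdsWithin (Icc_mem_nhdsGT_of_mem ⟨hx'.1, hx.2⟩)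
  · exact (hv.mono (by rw [uIcc_of_le hs.2]; exact Icc_subset_Icc hs.1 le_rfl)).intervalIntegrable

lemma global_bound {E : Type*} [NormedAddCommGroup E] [NormedSpace ℝ E]
    (Φ : E → ℝ) (hΦ : ContDiff ℝ 1 Φ) (C : ℝ)
    (hC : ∀ x, ‖iteratedFDeriv ℝ 1 Φ x‖ ≤ C) (z : E) :
    |Φ z| ≤ |Φ 0| + C * ‖z‖ := by
  have hfd : ∀ x : E, ‖fderiv ℝ Φ x‖ ≤ C := by
    intro x
    apply ContinuousLinearMap.opNorm_le_bound _ (le_trans (norm_nonneg _) (hC 0))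
    intro v
    have h1 : fderiv ℝ Φ x v = iteratedFDeriv ℝ 1 Φ x ![v] := by
      rw [iteratedFDeriv_one_apply]; rfl
    rw [h1]
    calc ‖iteratedFDeriv ℝ 1 Φ x ![v]‖
        ≤ ‖iteratedFDeriv ℝ 1 Φ x‖ * ∏ i : Fin 1, ‖(![v] : Fin 1 → E) i‖ :=
          (iteratedFDeriv ℝ 1 Φ x).le_opNorm _
      _ ≤ C * ‖v‖ := by
          simp only [Finset.univ_unique, Finset.prod_singleton]
          exact mul_le_mul_of_nonneg_right (hC x) (norm_nonneg v) |>.trans (by simp)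
  have hd : ∀ x ∈ (univ : Set E), DifferentiableAt ℝ Φ x :=
    fun x _ => (hΦ.differentiable one_ne_zero) x
  have key := (convex_univ (𝕜 := ℝ) (E := E)).norm_image_sub_le_of_norm_fderiv_le
    hd (fun x _ => hfd x) (mem_univ (0:E)) (mem_univ z)
  simp only [sub_zero] at key
  have habs : |Φ z - Φ 0| ≤ C * ‖z‖ := key
  calc |Φ z| = |Φ 0 + (Φ z - Φ 0)| := by ring_nf
    _ ≤ |Φ 0| + |Φ z - Φ 0| := abs_add_le _ _
    _ ≤ |Φ 0| + C * ‖z‖ := by linarith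

lemma omega_midpoint {E : Type*} [NormedAddCommGroup E] [NormedSpace ℝ E]
    (Φ : E → ℝ) (hΦ : ContDiff ℝ 2 Φ) (cΦ : ℝ)
    (hcΦ : ∀ x h, cΦ * ‖h‖ ^ 2 ≤ iteratedFDeriv ℝ 2 Φ x ![h, h])
    (γ : ℝ → E) (x₀ x₁ : E)
    (hint : ∀ x : E, IntegrableOn (fun ω => Φ (x - γ ω)) (Ioo (0:ℝ) 1)) :
    cΦ * ‖x₁ - x₀‖ ^ 2 / 4 ≤
      (∫ ω in Ioo (0:ℝ) 1, Φ (x₀ - γ ω)) + (∫ ω in Ioo (0:ℝ) 1, Φ (x₁ - γ ω))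
        - 2 * ∫ ω in Ioo (0:ℝ) 1, Φ ((1/2:ℝ) • x₀ + (1/2:ℝ) • x₁ - γ ω) := by
  set xm : E := (1/2:ℝ) • x₀ + (1/2:ℝ) • x₁ with hxm
  have hpt : ∀ ω : ℝ, cΦ * ‖x₁ - x₀‖ ^ 2 / 4 ≤
      Φ (x₀ - γ ω) + Φ (x₁ - γ ω) - 2 * Φ (xm - γ ω) := by
    intro ω
    have hf : ContDiff ℝ 2 (fun e : ℝ => Φ ((x₀ - γ ω) + e • (x₁ - x₀))) :=
      hΦ.comp (contDiff_const.add (contDiff_id.smul contDiff_const))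
    have hm : ∀ ε : ℝ, cΦ * ‖x₁ - x₀‖ ^ 2 ≤
        iteratedDeriv 2 (fun e : ℝ => Φ ((x₀ - γ ω) + e • (x₁ - x₀))) ε := by
      intro ε
      rw [line_iteratedDeriv_two Φ hΦ]
      exact hcΦ _ _
    have key := midpoint_gap _ hf _ hm
    have e0 : (x₀ - γ ω) + (0:ℝ) • (x₁ - x₀) = x₀ - γ ω := by module
    have e1 : (x₀ - γ ω) + (1:ℝ) • (x₁ - x₀) = x₁ - γ ω := by module
    have eh : (x₀ - γ ω) + (1/2:ℝ) • (x₁ - x₀) = xm - γ ω := by rw [hxm]; module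
    simp only [e0, e1, eh] at key
    linarith
  have hintc : IntegrableOn (fun _ : ℝ => cΦ * ‖x₁ - x₀‖ ^ 2 / 4) (Ioo (0:ℝ) 1) := by
    simp [IntegrableOn, Real.volume_Ioo]
  have hrhs : IntegrableOn
      (fun ω => Φ (x₀ - γ ω) + Φ (x₁ - γ ω) - 2 * Φ (xm - γ ω)) (Ioo (0:ℝ) 1) :=
    ((hint x₀).add (hint x₁)).sub ((hint xm).const_mul 2)
  have hmono := setIntegral_mono_on hintc hrhs measurableSet_Ioo (fun ω _ => hpt ω)
  have hconst : (∫ _ω in Ioo (0:ℝ) 1, cΦ * ‖x₁ - x₀‖ ^ 2 / 4) = cΦ * ‖x₁ - x₀‖ ^ 2 / 4 := by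
    rw [setIntegral_const]
    simp [Real.volume_Ioo]
  have hsplit : (∫ ω in Ioo (0:ℝ) 1, (Φ (x₀ - γ ω) + Φ (x₁ - γ ω) - 2 * Φ (xm - γ ω)))
      = (∫ ω in Ioo (0:ℝ) 1, Φ (x₀ - γ ω)) + (∫ ω in Ioo (0:ℝ) 1, Φ (x₁ - γ ω))
        - 2 * ∫ ω in Ioo (0:ℝ) 1, Φ (xm - γ ω) := by
    rw [eq_comm, ← integral_const_mul, ← integral_add (hint x₀) (hint x₁)]
    exact (integral_sub ((hint x₀).add (hint x₁)) ((hint xm).const_mul 2)).symm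
  rw [hconst, hsplit] at hmono
  exact hmono

end Helpers

noncomputable def indivCost (d : ℕ) (T : ℝ)
    (L : EuclideanSpace ℝ (Fin d) → EuclideanSpace ℝ (Fin d) → ℝ)
    (Φ Ψ : EuclideanSpace ℝ (Fin d) → ℝ)
    (Γ : ℝ → ℝ → EuclideanSpace ℝ (Fin d))
    (r : ℝ → EuclideanSpace ℝ (Fin d)) : ℝ :=
  (∫ s in Icc (0:ℝ) T,
      (L (r s) (derivWithin r (Icc (0:ℝ) T) s)
        + ∫ ω in Ioo (0:ℝ) 1, Φ (r s - Γ s ω)))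
    + ∫ ω in Ioo (0:ℝ) 1, Ψ (r 0 - Γ 0 ω)

set_option maxHeartbeats 2000000 in
/-- If `T > 0` satisfies `λ₀ − (T²/2)·c_Φ⁻ − T·c_Ψ⁻ > 0`, then any two `C¹` minimizers
of the individual cost with the same terminal point `q` coincide on `[0,T]`. -/
theorem individual_cost_minimizer_unique
    (d : ℕ) (hd : 1 ≤ d)
    (L : EuclideanSpace ℝ (Fin d) → EuclideanSpace ℝ (Fin d) → ℝ)
    (Φ Ψ : EuclideanSpace ℝ (Fin d) → ℝ)
    (Γ : ℝ → ℝ → EuclideanSpace ℝ (Fin d))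
    (T : ℝ) (hT : 0 < T)
    -- `L` is `C³` and nonnegative
    (hL : ContDiff ℝ 3 (fun p : EuclideanSpace ℝ (Fin d) × EuclideanSpace ℝ (Fin d) => L p.1 p.2))
    (hL0 : ∀ q v, 0 ≤ L q v)
    -- coercivity: `c₀|v|² ≤ L(q,v)`
    (c₀ : ℝ) (hc₀ : 0 < c₀) (hLc₀ : ∀ q v, c₀ * ‖v‖ ^ 2 ≤ L q v)
    -- `|∇_q L(q,v)| ≤ c₁`
    (c₁ : ℝ) (hc₁ : 0 < c₁)
    (hLc₁ : ∀ q v, ‖gradient (fun q' => L q' v) q‖ ≤ c₁)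
    -- interpolated strong convexity constant `λ₀`
    (lam₀ : ℝ) (hlam₀ : 0 < lam₀)
    (hlamL : ∀ q₀ q₁ v₀ v₁ : EuclideanSpace ℝ (Fin d), ∀ ε : ℝ,
      lam₀ * ‖v₁ - v₀‖ ^ 2 ≤
        iteratedDeriv 2
          (fun e : ℝ => L ((1 - e) • q₀ + e • q₁) ((1 - e) • v₀ + e • v₁)) ε)
    -- `Φ`, `Ψ` are `C³`, even, bounded below, with bounded derivatives of order 1,2,3
    (hΦ : ContDiff ℝ 3 Φ) (hΨ : ContDiff ℝ 3 Ψ)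
    (hΦe : ∀ x, Φ (-x) = Φ x) (hΨe : ∀ x, Ψ (-x) = Ψ x)
    (hΦb : BddBelow (range Φ)) (hΨb : BddBelow (range Ψ))
    (hΦd : ∀ i, 1 ≤ i → i ≤ 3 → ∃ C, ∀ x, ‖iteratedFDeriv ℝ i Φ x‖ ≤ C)
    (hΨd : ∀ i, 1 ≤ i → i ≤ 3 → ∃ C, ∀ x, ‖iteratedFDeriv ℝ i Ψ x‖ ≤ C)
    -- `c_Φ I ≤ ∇²Φ` and `c_Ψ I ≤ ∇²Ψ`
    (cΦ cΨ : ℝ)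
    (hcΦ : ∀ x h, cΦ * ‖h‖ ^ 2 ≤ iteratedFDeriv ℝ 2 Φ x ![h, h])
    (hcΨ : ∀ x h, cΨ * ‖h‖ ^ 2 ≤ iteratedFDeriv ℝ 2 Ψ x ![h, h])
    -- `Γ` is jointly measurable, bounded, continuous in time
    (hΓm : Measurable (fun p : ℝ × ℝ => Γ p.1 p.2))
    (hΓb : ∃ C, ∀ t ω, ‖Γ t ω‖ ≤ C)
    (hΓc : ∀ ω, Continuous (fun t => Γ t ω))
    -- smallness of `T`: `λ₀ − (T²/2)·c_Φ⁻ − T·c_Ψ⁻ > 0`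
    (hsmall : 0 < lam₀ - T ^ 2 / 2 * max (-cΦ) 0 - T * max (-cΨ) 0)
    (q : EuclideanSpace ℝ (Fin d))
    (r₀ r₁ : ℝ → EuclideanSpace ℝ (Fin d))
    (hr₀ : ContDiffOn ℝ 1 r₀ (Icc 0 T)) (hr₀T : r₀ T = q)
    (hr₁ : ContDiffOn ℝ 1 r₁ (Icc 0 T)) (hr₁T : r₁ T = q)
    (hmin₀ : ∀ r : ℝ → EuclideanSpace ℝ (Fin d),
      ContDiffOn ℝ 1 r (Icc 0 T) → r T = q →
        indivCost d T L Φ Ψ Γ r₀ ≤ indivCost d T L Φ Ψ Γ r)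
    (hmin₁ : ∀ r : ℝ → EuclideanSpace ℝ (Fin d),
      ContDiffOn ℝ 1 r (Icc 0 T) → r T = q →
        indivCost d T L Φ Ψ Γ r₁ ≤ indivCost d T L Φ Ψ Γ r) :
    ∀ s ∈ Icc (0:ℝ) T, r₀ s = r₁ s := by
  classical
  have hUD : UniqueDiffOn ℝ (Icc (0:ℝ) T) := uniqueDiffOn_Icc hT
  obtain ⟨CΓ, hCΓ⟩ := hΓb
  obtain ⟨C1Φ, hC1Φ⟩ := hΦd 1 le_rfl (by norm_num)
  obtain ⟨C1Ψ, hC1Ψ⟩ := hΨd 1 le_rfl (by norm_num)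
  -- integrability over Ω
  have hΦI : ∀ (x : EuclideanSpace ℝ (Fin d)) (t : ℝ),
      IntegrableOn (fun ω => Φ (x - Γ t ω)) (Ioo (0:ℝ) 1) := by
    intro x t
    have hmeas : Measurable (fun ω => Φ (x - Γ t ω)) :=
      hΦ.continuous.measurable.comp
        (measurable_const.sub (hΓm.comp measurable_prodMk_left))
    apply Integrable.mono' (g := fun _ : ℝ => |Φ 0| + C1Φ * (‖x‖ + CΓ))
      ((integrableOn_const_iff).mpr (Or.inr (by simp [Real.volume_Ioo])))
      hmeas.aestronglyMeasurable
    apply ae_of_all; intro ω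
    have hb := global_bound Φ (hΦ.of_le (by norm_num)) C1Φ hC1Φ (x - Γ t ω)
    have hC1' : 0 ≤ C1Φ := le_trans (norm_nonneg _) (hC1Φ 0)
    have hn : ‖x - Γ t ω‖ ≤ ‖x‖ + CΓ :=
      le_trans (norm_sub_le _ _) (by linarith [hCΓ t ω])
    calc ‖Φ (x - Γ t ω)‖ = |Φ (x - Γ t ω)| := rfl
      _ ≤ |Φ 0| + C1Φ * ‖x - Γ t ω‖ := hb
      _ ≤ |Φ 0| + C1Φ * (‖x‖ + CΓ) := by nlinarith
  have hΨI : ∀ (x : EuclideanSpace ℝ (Fin d)),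
      IntegrableOn (fun ω => Ψ (x - Γ 0 ω)) (Ioo (0:ℝ) 1) := by
    intro x
    have hmeas : Measurable (fun ω => Ψ (x - Γ 0 ω)) :=
      hΨ.continuous.measurable.comp
        (measurable_const.sub (hΓm.comp measurable_prodMk_left))
    apply Integrable.mono' (g := fun _ : ℝ => |Ψ 0| + C1Ψ * (‖x‖ + CΓ))
      ((integrableOn_const_iff).mpr (Or.inr (by simp [Real.volume_Ioo])))
      hmeas.aestronglyMeasurable
    apply ae_of_all; intro ω
    have hb := global_bound Ψ (hΨ.of_le (by norm_num)) C1Ψ hC1Ψ (x - Γ 0 ω)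
    have hC1' : 0 ≤ C1Ψ := le_trans (norm_nonneg _) (hC1Ψ 0)
    have hn : ‖x - Γ 0 ω‖ ≤ ‖x‖ + CΓ :=
      le_trans (norm_sub_le _ _) (by linarith [hCΓ 0 ω])
    calc ‖Ψ (x - Γ 0 ω)‖ = |Ψ (x - Γ 0 ω)| := rfl
      _ ≤ |Ψ 0| + C1Ψ * ‖x - Γ 0 ω‖ := hb
      _ ≤ |Ψ 0| + C1Ψ * (‖x‖ + CΓ) := by nlinarith
  -- continuity in time of the Ω-averaged Φ-term
  have hPcΦ : ∀ (r : ℝ → EuclideanSpace ℝ (Fin d)), ContinuousOn r (Icc 0 T) →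
      ContinuousOn (fun t => ∫ ω in Ioo (0:ℝ) 1, Φ (r t - Γ t ω)) (Icc 0 T) := by
    intro r hrc
    obtain ⟨R, hR⟩ := isCompact_Icc.exists_bound_of_continuousOn hrc
    intro t ht
    apply continuousWithinAt_of_dominated (bound := fun _ : ℝ => |Φ 0| + C1Φ * (R + CΓ))
    · exact Filter.Eventually.of_forall (fun x =>
        (hΦ.continuous.measurable.comp
          (measurable_const.sub (hΓm.comp measurable_prodMk_left))).aestronglyMeasurable)
    · filter_upwards [self_mem_nhdsWithin] with x hx
      apply ae_of_all; intro ω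
      have hb := global_bound Φ (hΦ.of_le (by norm_num)) C1Φ hC1Φ (r x - Γ x ω)
      have hC1' : 0 ≤ C1Φ := le_trans (norm_nonneg _) (hC1Φ 0)
      have hn : ‖r x - Γ x ω‖ ≤ R + CΓ :=
        le_trans (norm_sub_le _ _) (add_le_add (hR x hx) (hCΓ x ω))
      calc ‖Φ (r x - Γ x ω)‖ = |Φ (r x - Γ x ω)| := rfl
        _ ≤ |Φ 0| + C1Φ * ‖r x - Γ x ω‖ := hb
        _ ≤ |Φ 0| + C1Φ * (R + CΓ) := by nlinarith
    · exact (integrableOn_const_iff).mpr (Or.inr (by simp [Real.volume_Ioo]))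
    · apply ae_of_all; intro ω
      exact (hΦ.continuous.continuousAt).comp_continuousWithinAt
        ((hrc t ht).sub ((hΓc ω).continuousAt.continuousWithinAt))
  -- the midpoint path
  set rmid : ℝ → EuclideanSpace ℝ (Fin d) :=
    fun t => (1/2:ℝ) • r₀ t + (1/2:ℝ) • r₁ t with hrmdef
  have hrm : ContDiffOn ℝ 1 rmid (Icc 0 T) := (hr₀.const_smul _).add (hr₁.const_smul _)
  have hrmT : rmid T = q := by
    simp only [hrmdef, hr₀T, hr₁T]; module
  set v₀ := derivWithin r₀ (Icc (0:ℝ) T) with hv₀def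
  set v₁ := derivWithin r₁ (Icc (0:ℝ) T) with hv₁def
  set vm := derivWithin rmid (Icc (0:ℝ) T) with hvmdef
  have hv₀c : ContinuousOn v₀ (Icc 0 T) := hr₀.continuousOn_derivWithin hUD le_rfl
  have hv₁c : ContinuousOn v₁ (Icc 0 T) := hr₁.continuousOn_derivWithin hUD le_rfl
  have hvmc : ContinuousOn vm (Icc 0 T) := hrm.continuousOn_derivWithin hUD le_rfl
  have hvm : ∀ t ∈ Icc (0:ℝ) T, vm t = (1/2:ℝ) • v₀ t + (1/2:ℝ) • v₁ t := by
    intro t ht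
    have h0 : HasDerivWithinAt r₀ (v₀ t) (Icc 0 T) t :=
      ((hr₀.differentiableOn one_ne_zero) t ht).hasDerivWithinAt
    have h1 : HasDerivWithinAt r₁ (v₁ t) (Icc 0 T) t :=
      ((hr₁.differentiableOn one_ne_zero) t ht).hasDerivWithinAt
    exact ((h0.const_smul (1/2:ℝ)).add (h1.const_smul (1/2:ℝ))).derivWithin (hUD t ht)
  -- the quantity W
  set W := ∫ t in (0:ℝ)..T, ‖v₁ t - v₀ t‖^2 with hWdef
  have hΔvc : ContinuousOn (fun t => ‖v₁ t - v₀ t‖^2) (Icc 0 T) :=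
    ((hv₁c.sub hv₀c).norm).pow 2
  have hW0 : 0 ≤ W :=
    intervalIntegral.integral_nonneg hT.le (fun x _ => sq_nonneg _)
  -- pointwise bound on the separation via W
  have hΔ : ∀ t ∈ Icc (0:ℝ) T, ‖r₁ t - r₀ t‖^2 ≤ (T - t) * W := by
    intro t ht
    have hf0 := ftc_icc r₀ T hT hr₀ t ht
    have hf1 := ftc_icc r₁ T hT hr₁ t ht
    have hi0 : IntervalIntegrable v₀ volume t T := by
      apply ContinuousOn.intervalIntegrable
      rw [uIcc_of_le ht.2]
      exact hv₀c.mono (Icc_subset_Icc ht.1 le_rfl)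
    have hi1 : IntervalIntegrable v₁ volume t T := by
      apply ContinuousOn.intervalIntegrable
      rw [uIcc_of_le ht.2]
      exact hv₁c.mono (Icc_subset_Icc ht.1 le_rfl)
    have heq : r₁ t - r₀ t = ∫ x in t..T, (v₀ x - v₁ x) := by
      rw [intervalIntegral.integral_sub hi0 hi1, hf0, hf1, hr₀T, hr₁T]
      abel
    have hnorm : ‖r₁ t - r₀ t‖ ≤ ∫ x in t..T, ‖v₀ x - v₁ x‖ := by
      rw [heq]
      exact intervalIntegral.norm_integral_le_integral_norm ht.2
    have hsq := sq_integral_le (fun x => ‖v₀ x - v₁ x‖) t T ht.2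
      (((hv₀c.sub hv₁c).norm).mono (Icc_subset_Icc ht.1 le_rfl))
      (fun x _ => norm_nonneg _)
    have hmono2 : (∫ x in t..T, ‖v₀ x - v₁ x‖^2) ≤ W := by
      rw [hWdef]
      have hrev : (fun x => ‖v₀ x - v₁ x‖^2) = fun x => ‖v₁ x - v₀ x‖^2 :=
        funext fun x => by rw [norm_sub_rev]
      rw [hrev]
      apply intervalIntegral.integral_mono_interval ht.1 ht.2 le_rfl
      · exact Filter.Eventually.of_forall (fun x => sq_nonneg _)
      · apply ContinuousOn.intervalIntegrable
        rw [uIcc_of_le hT.le]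
        exact hΔvc
    have h1 : ‖r₁ t - r₀ t‖^2 ≤ (∫ x in t..T, ‖v₀ x - v₁ x‖)^2 :=
      pow_le_pow_left₀ (norm_nonneg _) hnorm 2
    have h2 : (T - t) * (∫ x in t..T, ‖v₀ x - v₁ x‖^2) ≤ (T - t) * W :=
      mul_le_mul_of_nonneg_left hmono2 (by linarith [ht.2])
    linarith
  -- it suffices to show W ≤ 0
  suffices hWz : W ≤ 0 by
    intro s hs
    have hd := hΔ s hs
    have hTW : (T - s) * W ≤ 0 :=
      mul_nonpos_of_nonneg_of_nonpos (by linarith [hs.2]) hWz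
    have h0 : ‖r₁ s - r₀ s‖^2 ≤ 0 := le_trans hd hTW
    have hn : ‖r₁ s - r₀ s‖ = 0 := by nlinarith [norm_nonneg (r₁ s - r₀ s)]
    have := norm_eq_zero.mp hn
    have := sub_eq_zero.mp this
    exact this.symm
  -- cost of the midpoint path vs the two minimizers
  have hcost : indivCost d T L Φ Ψ Γ r₀ + indivCost d T L Φ Ψ Γ r₁
      - 2 * indivCost d T L Φ Ψ Γ rmid ≤ 0 := by
    have h0 := hmin₀ rmid hrm hrmT
    have h1 := hmin₁ rmid hrm hrmT
    linarith
  -- integrands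
  set A₀ : ℝ → ℝ := fun t => L (r₀ t) (v₀ t) + ∫ ω in Ioo (0:ℝ) 1, Φ (r₀ t - Γ t ω) with hA₀def
  set A₁ : ℝ → ℝ := fun t => L (r₁ t) (v₁ t) + ∫ ω in Ioo (0:ℝ) 1, Φ (r₁ t - Γ t ω) with hA₁def
  set Am : ℝ → ℝ := fun t => L (rmid t) (vm t) + ∫ ω in Ioo (0:ℝ) 1, Φ (rmid t - Γ t ω) with hAmdef
  have hICr₀ : indivCost d T L Φ Ψ Γ r₀
      = (∫ t in Icc (0:ℝ) T, A₀ t) + ∫ ω in Ioo (0:ℝ) 1, Ψ (r₀ 0 - Γ 0 ω) := rfl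
  have hICr₁ : indivCost d T L Φ Ψ Γ r₁
      = (∫ t in Icc (0:ℝ) T, A₁ t) + ∫ ω in Ioo (0:ℝ) 1, Ψ (r₁ 0 - Γ 0 ω) := rfl
  have hICrm : indivCost d T L Φ Ψ Γ rmid
      = (∫ t in Icc (0:ℝ) T, Am t) + ∫ ω in Ioo (0:ℝ) 1, Ψ (rmid 0 - Γ 0 ω) := rfl
  -- continuity and integrability of the integrands
  have hA₀c : ContinuousOn A₀ (Icc 0 T) :=
    (hL.continuous.comp_continuousOn (hr₀.continuousOn.prodMk hv₀c)).add
      (hPcΦ r₀ hr₀.continuousOn)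
  have hA₁c : ContinuousOn A₁ (Icc 0 T) :=
    (hL.continuous.comp_continuousOn (hr₁.continuousOn.prodMk hv₁c)).add
      (hPcΦ r₁ hr₁.continuousOn)
  have hAmc : ContinuousOn Am (Icc 0 T) :=
    (hL.continuous.comp_continuousOn (hrm.continuousOn.prodMk hvmc)).add
      (hPcΦ rmid hrm.continuousOn)
  have hA₀i : IntegrableOn A₀ (Icc 0 T) := hA₀c.integrableOn_compact isCompact_Icc
  have hA₁i : IntegrableOn A₁ (Icc 0 T) := hA₁c.integrableOn_compact isCompact_Icc
  have hAmi : IntegrableOn Am (Icc 0 T) := hAmc.integrableOn_compact isCompact_Icc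
  -- pointwise convexity-defect inequality
  have hkey : ∀ t ∈ Icc (0:ℝ) T,
      lam₀ * ‖v₁ t - v₀ t‖^2 / 4 + cΦ * ‖r₁ t - r₀ t‖^2 / 4 ≤ A₀ t + A₁ t - 2 * Am t := by
    intro t ht
    have hfL : ContDiff ℝ 2
        (fun e : ℝ => L ((1-e) • r₀ t + e • r₁ t) ((1-e) • v₀ t + e • v₁ t)) := by
      have hinner : ContDiff ℝ 2 (fun e : ℝ =>
          (((1-e) • r₀ t + e • r₁ t, (1-e) • v₀ t + e • v₁ t) :
            EuclideanSpace ℝ (Fin d) × EuclideanSpace ℝ (Fin d))) :=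
        ContDiff.prodMk
          (((contDiff_const.sub contDiff_id).smul contDiff_const).add
            (contDiff_id.smul contDiff_const))
          (((contDiff_const.sub contDiff_id).smul contDiff_const).add
            (contDiff_id.smul contDiff_const))
      exact (hL.of_le (by norm_num)).comp hinner
    have hLgap := midpoint_gap _ hfL _ (hlamL (r₀ t) (r₁ t) (v₀ t) (v₁ t))
    have e0q : (1-(0:ℝ)) • r₀ t + (0:ℝ) • r₁ t = r₀ t := by module
    have e0v : (1-(0:ℝ)) • v₀ t + (0:ℝ) • v₁ t = v₀ t := by module
    have e1q : (1-(1:ℝ)) • r₀ t + (1:ℝ) • r₁ t = r₁ t := by module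
    have e1v : (1-(1:ℝ)) • v₀ t + (1:ℝ) • v₁ t = v₁ t := by module
    have ehq : (1-(1/2:ℝ)) • r₀ t + (1/2:ℝ) • r₁ t = rmid t := by
      simp only [hrmdef]; module
    have ehv : (1-(1/2:ℝ)) • v₀ t + (1/2:ℝ) • v₁ t = vm t := by
      rw [hvm t ht]; module
    simp only [e0q, e0v, e1q, e1v, ehq, ehv] at hLgap
    have hΦgap := omega_midpoint Φ (hΦ.of_le (by norm_num)) cΦ hcΦ (Γ t) (r₀ t) (r₁ t)
      (fun x => hΦI x t)
    have hmid : (1/2:ℝ) • r₀ t + (1/2:ℝ) • r₁ t = rmid t := by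
      simp only [hrmdef]
    rw [hmid] at hΦgap
    simp only [hA₀def, hA₁def, hAmdef]
    linarith
  -- Ψ-part inequality
  have hΨgap := omega_midpoint Ψ (hΨ.of_le (by norm_num)) cΨ hcΨ (Γ 0) (r₀ 0) (r₁ 0) hΨI
  have hmid0 : (1/2:ℝ) • r₀ 0 + (1/2:ℝ) • r₁ 0 = rmid 0 := by simp only [hrmdef]
  rw [hmid0] at hΨgap
  -- integrate the pointwise inequality
  have hintLHS : IntegrableOn
      (fun t => lam₀ * ‖v₁ t - v₀ t‖^2 / 4 + cΦ * ‖r₁ t - r₀ t‖^2 / 4) (Icc 0 T) := by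
    apply ContinuousOn.integrableOn_compact isCompact_Icc
    exact ((hΔvc.const_smul lam₀).div_const 4).add
      ((((hr₁.continuousOn.sub hr₀.continuousOn).norm.pow 2).const_smul cΦ).div_const 4)
  have hintRHS : IntegrableOn (fun t => A₀ t + A₁ t - 2 * Am t) (Icc 0 T) :=
    ((hA₀i.add hA₁i).sub (hAmi.const_mul 2))
  have hIineq := setIntegral_mono_on hintLHS hintRHS measurableSet_Icc hkey
  have hsplitR : (∫ t in Icc (0:ℝ) T, (A₀ t + A₁ t - 2 * Am t))
      = (∫ t in Icc (0:ℝ) T, A₀ t) + (∫ t in Icc (0:ℝ) T, A₁ t)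
        - 2 * ∫ t in Icc (0:ℝ) T, Am t := by
    rw [eq_comm, ← integral_const_mul, ← integral_add hA₀i hA₁i]
    exact (integral_sub (hA₀i.add hA₁i) (hAmi.const_mul 2)).symm
  -- conversion of set integrals
  have hWIcc : (∫ t in Icc (0:ℝ) T, ‖v₁ t - v₀ t‖^2) = W := by
    rw [hWdef, intervalIntegral.integral_of_le hT.le, integral_Icc_eq_integral_Ioc]
  have hTint : (∫ t in Icc (0:ℝ) T, (T - t)) = T^2/2 := by
    rw [integral_Icc_eq_integral_Ioc, ← intervalIntegral.integral_of_le hT.le]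
    rw [intervalIntegral.integral_sub intervalIntegrable_const
      intervalIntegral.intervalIntegrable_id]
    rw [intervalIntegral.integral_const, integral_id]
    simp
    ring
  -- lower bound for the LHS integral
  have hLHSlow : (lam₀ - T^2/2 * max (-cΦ) 0) * W / 4
      ≤ ∫ t in Icc (0:ℝ) T, (lam₀ * ‖v₁ t - v₀ t‖^2 / 4 + cΦ * ‖r₁ t - r₀ t‖^2 / 4) := by
    have hgi : IntegrableOn
        (fun t => lam₀ * ‖v₁ t - v₀ t‖^2 / 4 - max (-cΦ) 0 * ((T-t)*W) / 4) (Icc 0 T) := by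
      apply ContinuousOn.integrableOn_compact isCompact_Icc
      apply ContinuousOn.sub
      · exact (hΔvc.const_smul lam₀).div_const 4
      · exact ((continuous_const.mul ((continuous_const.sub continuous_id).mul
          continuous_const)).div_const 4).continuousOn
    have hptg : ∀ t ∈ Icc (0:ℝ) T,
        lam₀ * ‖v₁ t - v₀ t‖^2 / 4 - max (-cΦ) 0 * ((T-t)*W) / 4
          ≤ lam₀ * ‖v₁ t - v₀ t‖^2 / 4 + cΦ * ‖r₁ t - r₀ t‖^2 / 4 := by
      intro t ht
      have h1 := hΔ t ht
      have h2 : -cΦ ≤ max (-cΦ) 0 := le_max_left _ _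
      have h3 : (0:ℝ) ≤ max (-cΦ) 0 := le_max_right _ _
      have e1 : 0 ≤ (cΦ + max (-cΦ) 0) * ‖r₁ t - r₀ t‖^2 :=
        mul_nonneg (by linarith) (sq_nonneg _)
      have e2 : 0 ≤ max (-cΦ) 0 * ((T-t)*W - ‖r₁ t - r₀ t‖^2) :=
        mul_nonneg h3 (by linarith)
      nlinarith
    have hmono := setIntegral_mono_on hgi hintLHS measurableSet_Icc hptg
    have hcomp : (∫ t in Icc (0:ℝ) T,
        (lam₀ * ‖v₁ t - v₀ t‖^2 / 4 - max (-cΦ) 0 * ((T-t)*W) / 4))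
        = lam₀ * W / 4 - max (-cΦ) 0 * (T^2/2) * W / 4 := by
      have hi1 : IntegrableOn (fun t => lam₀ * ‖v₁ t - v₀ t‖^2 / 4) (Icc 0 T) := by
        apply ContinuousOn.integrableOn_compact isCompact_Icc
        exact (hΔvc.const_smul lam₀).div_const 4
      have hi2 : IntegrableOn (fun t => max (-cΦ) 0 * ((T-t)*W) / 4) (Icc 0 T) := by
        apply ContinuousOn.integrableOn_compact isCompact_Icc
        exact ((continuous_const.mul ((continuous_const.sub continuous_id).mul
          continuous_const)).div_const 4).continuousOn
      rw [integral_sub hi1 hi2]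
      congr 1
      · rw [show (fun t => lam₀ * ‖v₁ t - v₀ t‖^2 / 4)
            = fun t => (lam₀/4) * ‖v₁ t - v₀ t‖^2 from funext fun t => by ring]
        rw [integral_const_mul, hWIcc]
        ring
      · rw [show (fun t => max (-cΦ) 0 * ((T-t)*W) / 4)
            = fun t => (max (-cΦ) 0 * W / 4) * (T - t) from funext fun t => by ring]
        rw [integral_const_mul, hTint]
        ring
    rw [hcomp] at hmono
    have : (lam₀ - T^2/2 * max (-cΦ) 0) * W / 4
        = lam₀ * W / 4 - max (-cΦ) 0 * (T^2/2) * W / 4 := by ring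
    linarith
  -- Ψ lower bound
  have hΨlow : -(max (-cΨ) 0) * T * W / 4 ≤ cΨ * ‖r₁ 0 - r₀ 0‖^2 / 4 := by
    have h1 : ‖r₁ 0 - r₀ 0‖^2 ≤ T * W := by
      have := hΔ 0 ⟨le_rfl, hT.le⟩
      simpa using this
    have h2 : -cΨ ≤ max (-cΨ) 0 := le_max_left _ _
    have h3 : (0:ℝ) ≤ max (-cΨ) 0 := le_max_right _ _
    have e1 : 0 ≤ (cΨ + max (-cΨ) 0) * ‖r₁ 0 - r₀ 0‖^2 :=
      mul_nonneg (by linarith) (sq_nonneg _)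
    have e2 : 0 ≤ max (-cΨ) 0 * (T*W - ‖r₁ 0 - r₀ 0‖^2) :=
      mul_nonneg h3 (by linarith)
    nlinarith
  -- assemble everything
  rw [hICr₀, hICr₁, hICrm] at hcost
  rw [hsplitR] at hIineq
  have hfin : (lam₀ - T^2/2 * max (-cΦ) 0) * W / 4 + cΨ * ‖r₁ 0 - r₀ 0‖^2 / 4 ≤ 0 := by
    have := le_trans hLHSlow hIineq
    linarith [hΨgap, this, hcost]
  nlinarith [hfin, hΨlow, hsmall, hW0]
end

section
/- Fix 0 < t ≤ T and q, h ∈ ℝ^d. Assume L : ℝ^d × ℝ^d → ℝ is convex (jointly in both variables) and Φ and Ψ are convex, and that the infima defining û(t, q+h) and û(t, q−h) are each attained by a C¹ path. Then û(t, q+h) + û(t, q−h) ≥ 2·û(t, q). -/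
open MeasureTheory Set
open scoped RealInnerProductSpace

/-- The value function `û(t,q) := inf { B₀^t(r̄) : r̄ C¹ on [0,t], r̄(t) = q }`. -/
noncomputable def uhat (d : ℕ) (t : ℝ)
    (L : EuclideanSpace ℝ (Fin d) → EuclideanSpace ℝ (Fin d) → ℝ)
    (Φ Ψ : EuclideanSpace ℝ (Fin d) → ℝ)
    (Γ : ℝ → ℝ → EuclideanSpace ℝ (Fin d))
    (q : EuclideanSpace ℝ (Fin d)) : ℝ :=
  sInf {c : ℝ | ∃ r : ℝ → EuclideanSpace ℝ (Fin d),
    ContDiffOn ℝ 1 r (Icc (0:ℝ) t) ∧ r t = q ∧ indivCost d t L Φ Ψ Γ r = c}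

section Aux

variable {d : ℕ}

private lemma norm_sub_mem_ball' {x y : EuclideanSpace ℝ (Fin d)} {C R : ℝ}
    (hx : ‖x‖ ≤ R) (hy : ‖y‖ ≤ C) :
    x - y ∈ Metric.closedBall (0 : EuclideanSpace ℝ (Fin d)) (R + C) := by
  rw [Metric.mem_closedBall, dist_zero_right]
  exact (norm_sub_le _ _).trans (add_le_add hx hy)

private lemma pot_integrable (Φ : EuclideanSpace ℝ (Fin d) → ℝ) (hΦ : Continuous Φ)
    (Γ : ℝ → ℝ → EuclideanSpace ℝ (Fin d))
    (hΓm : Measurable (fun p : ℝ × ℝ => Γ p.1 p.2))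
    (hΓb : ∃ C, ∀ s ω, ‖Γ s ω‖ ≤ C)
    (x : EuclideanSpace ℝ (Fin d)) (s : ℝ) :
    IntegrableOn (fun ω => Φ (x - Γ s ω)) (Ioo (0:ℝ) 1) := by
  obtain ⟨C, hC⟩ := hΓb
  obtain ⟨M, hM⟩ := (isCompact_closedBall (0 : EuclideanSpace ℝ (Fin d))
    (‖x‖ + C)).exists_bound_of_continuousOn hΦ.continuousOn
  have hmeas : Measurable (fun ω => Φ (x - Γ s ω)) :=
    hΦ.measurable.comp (measurable_const.sub (hΓm.comp (measurable_const.prodMk measurable_id)))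
  exact Integrable.mono' (g := fun _ => M)
    (integrableOn_const measure_Ioo_lt_top.ne) hmeas.aestronglyMeasurable
    (Filter.Eventually.of_forall fun ω => hM _ (norm_sub_mem_ball' le_rfl (hC s ω)))

private lemma potInt_continuousOn (Φ : EuclideanSpace ℝ (Fin d) → ℝ) (hΦ : Continuous Φ)
    (Γ : ℝ → ℝ → EuclideanSpace ℝ (Fin d))
    (hΓm : Measurable (fun p : ℝ × ℝ => Γ p.1 p.2))
    (hΓb : ∃ C, ∀ s ω, ‖Γ s ω‖ ≤ C)
    (hΓc : ∀ ω, Continuous (fun s => Γ s ω))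
    {t : ℝ} (c : ℝ → EuclideanSpace ℝ (Fin d)) (hc : ContinuousOn c (Icc (0:ℝ) t)) :
    ContinuousOn (fun s => ∫ ω in Ioo (0:ℝ) 1, Φ (c s - Γ s ω)) (Icc (0:ℝ) t) := by
  obtain ⟨C, hC⟩ := hΓb
  obtain ⟨R, hR⟩ := isCompact_Icc.exists_bound_of_continuousOn hc
  obtain ⟨M, hM⟩ := (isCompact_closedBall (0 : EuclideanSpace ℝ (Fin d))
    (R + C)).exists_bound_of_continuousOn hΦ.continuousOn
  apply continuousOn_of_dominated (bound := fun _ => M)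
  · intro s _
    exact (hΦ.measurable.comp (measurable_const.sub
      (hΓm.comp (measurable_const.prodMk measurable_id)))).aestronglyMeasurable
  · intro s hs
    exact Filter.Eventually.of_forall fun ω => hM _ (norm_sub_mem_ball' (hR s hs) (hC s ω))
  · exact integrableOn_const measure_Ioo_lt_top.ne
  · exact Filter.Eventually.of_forall fun ω =>
      hΦ.comp_continuousOn (hc.sub (hΓc ω).continuousOn)

private lemma cost_mid_le
    (L : EuclideanSpace ℝ (Fin d) → EuclideanSpace ℝ (Fin d) → ℝ)
    (Φ Ψ : EuclideanSpace ℝ (Fin d) → ℝ)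
    (Γ : ℝ → ℝ → EuclideanSpace ℝ (Fin d))
    {t : ℝ} (ht : 0 < t)
    (hL : Continuous (fun p : EuclideanSpace ℝ (Fin d) × EuclideanSpace ℝ (Fin d) => L p.1 p.2))
    (hΦ : Continuous Φ) (hΨ : Continuous Ψ)
    (hΓm : Measurable (fun p : ℝ × ℝ => Γ p.1 p.2))
    (hΓb : ∃ C, ∀ s ω, ‖Γ s ω‖ ≤ C)
    (hΓc : ∀ ω, Continuous (fun s => Γ s ω))
    (hLconv : ConvexOn ℝ univ
      (fun p : EuclideanSpace ℝ (Fin d) × EuclideanSpace ℝ (Fin d) => L p.1 p.2))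
    (hΦconv : ConvexOn ℝ univ Φ) (hΨconv : ConvexOn ℝ univ Ψ)
    {a b : ℝ → EuclideanSpace ℝ (Fin d)}
    (ha : ContDiffOn ℝ 1 a (Icc (0:ℝ) t)) (hb : ContDiffOn ℝ 1 b (Icc (0:ℝ) t)) :
    indivCost d t L Φ Ψ Γ (fun s => (2⁻¹:ℝ) • (a s + b s))
      ≤ 2⁻¹ * indivCost d t L Φ Ψ Γ a + 2⁻¹ * indivCost d t L Φ Ψ Γ b := by
  set m : ℝ → EuclideanSpace ℝ (Fin d) := fun s => (2⁻¹:ℝ) • (a s + b s) with hm_def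
  have uD : UniqueDiffOn ℝ (Icc (0:ℝ) t) := uniqueDiffOn_Icc ht
  have hm : ContDiffOn ℝ 1 m (Icc (0:ℝ) t) := (ha.add hb).const_smul (2⁻¹:ℝ)
  have hderivm : ∀ s ∈ Icc (0:ℝ) t,
      derivWithin m (Icc (0:ℝ) t) s
        = (2⁻¹:ℝ) • (derivWithin a (Icc (0:ℝ) t) s + derivWithin b (Icc (0:ℝ) t) s) := by
    intro s hs
    have hA := ((ha.differentiableOn one_ne_zero) s hs).hasDerivWithinAt
    have hB := ((hb.differentiableOn one_ne_zero) s hs).hasDerivWithinAt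
    exact (HasDerivWithinAt.const_smul (2⁻¹:ℝ) (hA.add hB)).derivWithin (uD s hs)
  -- integrability of the time integrand for any C¹ path
  have hInt : ∀ (c : ℝ → EuclideanSpace ℝ (Fin d)), ContDiffOn ℝ 1 c (Icc (0:ℝ) t) →
      IntegrableOn (fun s => L (c s) (derivWithin c (Icc (0:ℝ) t) s)
        + ∫ ω in Ioo (0:ℝ) 1, Φ (c s - Γ s ω)) (Icc (0:ℝ) t) := by
    intro c hc
    have h1 : ContinuousOn (fun s => L (c s) (derivWithin c (Icc (0:ℝ) t) s)) (Icc (0:ℝ) t) :=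
      hL.comp_continuousOn (f := fun s => (c s, derivWithin c (Icc (0:ℝ) t) s))
        (hc.continuousOn.prodMk (hc.continuousOn_derivWithin uD le_rfl))
    have h2 := potInt_continuousOn Φ hΦ Γ hΓm hΓb hΓc c hc.continuousOn
    exact (h1.add h2).integrableOn_compact isCompact_Icc
  -- pointwise estimate for the L term
  have hptL : ∀ s ∈ Icc (0:ℝ) t,
      L (m s) (derivWithin m (Icc (0:ℝ) t) s)
        ≤ 2⁻¹ * L (a s) (derivWithin a (Icc (0:ℝ) t) s)
          + 2⁻¹ * L (b s) (derivWithin b (Icc (0:ℝ) t) s) := by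
    intro s hs
    have hcv := hLconv.2 (mem_univ (a s, derivWithin a (Icc (0:ℝ) t) s))
      (mem_univ (b s, derivWithin b (Icc (0:ℝ) t) s))
      (by norm_num : (0:ℝ) ≤ 2⁻¹) (by norm_num : (0:ℝ) ≤ 2⁻¹)
      (by norm_num : (2⁻¹:ℝ) + 2⁻¹ = 1)
    simp only [Prod.smul_mk, Prod.mk_add_mk, smul_eq_mul] at hcv
    rw [hderivm s hs]
    simpa [hm_def, smul_add] using hcv
  -- pointwise estimate for the Φ term
  have hptΦ : ∀ s ∈ Icc (0:ℝ) t,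
      (∫ ω in Ioo (0:ℝ) 1, Φ (m s - Γ s ω))
        ≤ 2⁻¹ * (∫ ω in Ioo (0:ℝ) 1, Φ (a s - Γ s ω))
          + 2⁻¹ * (∫ ω in Ioo (0:ℝ) 1, Φ (b s - Γ s ω)) := by
    intro s _
    have hia := pot_integrable Φ hΦ Γ hΓm hΓb (a s) s
    have hib := pot_integrable Φ hΦ Γ hΓm hΓb (b s) s
    have him := pot_integrable Φ hΦ Γ hΓm hΓb (m s) s
    have hpt : ∀ ω ∈ Ioo (0:ℝ) 1,
        Φ (m s - Γ s ω) ≤ 2⁻¹ * Φ (a s - Γ s ω) + 2⁻¹ * Φ (b s - Γ s ω) := by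
      intro ω _
      have hcv := hΦconv.2 (mem_univ (a s - Γ s ω)) (mem_univ (b s - Γ s ω))
        (by norm_num : (0:ℝ) ≤ 2⁻¹) (by norm_num : (0:ℝ) ≤ 2⁻¹)
        (by norm_num : (2⁻¹:ℝ) + 2⁻¹ = 1)
      have hms : m s - Γ s ω
          = (2⁻¹:ℝ) • (a s - Γ s ω) + (2⁻¹:ℝ) • (b s - Γ s ω) := by
        simp only [hm_def]
        module
      rw [hms]
      simpa using hcv
    calc (∫ ω in Ioo (0:ℝ) 1, Φ (m s - Γ s ω))
        ≤ ∫ ω in Ioo (0:ℝ) 1, (2⁻¹ * Φ (a s - Γ s ω) + 2⁻¹ * Φ (b s - Γ s ω)) :=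
          setIntegral_mono_on him ((hia.const_mul _).add (hib.const_mul _))
            measurableSet_Ioo hpt
      _ = 2⁻¹ * (∫ ω in Ioo (0:ℝ) 1, Φ (a s - Γ s ω))
          + 2⁻¹ * (∫ ω in Ioo (0:ℝ) 1, Φ (b s - Γ s ω)) := by
          rw [integral_add (hia.const_mul _) (hib.const_mul _),
            integral_const_mul, integral_const_mul]
  -- time integral comparison
  have hmono :
      (∫ s in Icc (0:ℝ) t, (L (m s) (derivWithin m (Icc (0:ℝ) t) s)
        + ∫ ω in Ioo (0:ℝ) 1, Φ (m s - Γ s ω)))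
      ≤ ∫ s in Icc (0:ℝ) t,
          (2⁻¹ * (L (a s) (derivWithin a (Icc (0:ℝ) t) s)
              + ∫ ω in Ioo (0:ℝ) 1, Φ (a s - Γ s ω))
          + 2⁻¹ * (L (b s) (derivWithin b (Icc (0:ℝ) t) s)
              + ∫ ω in Ioo (0:ℝ) 1, Φ (b s - Γ s ω))) := by
    refine setIntegral_mono_on (hInt m hm)
      (((hInt a ha).const_mul _).add ((hInt b hb).const_mul _)) measurableSet_Icc ?_
    intro s hs
    have h1 := hptL s hs
    have h2 := hptΦ s hs
    linarith
  have hsplit :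
      (∫ s in Icc (0:ℝ) t,
          (2⁻¹ * (L (a s) (derivWithin a (Icc (0:ℝ) t) s)
              + ∫ ω in Ioo (0:ℝ) 1, Φ (a s - Γ s ω))
          + 2⁻¹ * (L (b s) (derivWithin b (Icc (0:ℝ) t) s)
              + ∫ ω in Ioo (0:ℝ) 1, Φ (b s - Γ s ω))))
      = 2⁻¹ * (∫ s in Icc (0:ℝ) t, (L (a s) (derivWithin a (Icc (0:ℝ) t) s)
              + ∫ ω in Ioo (0:ℝ) 1, Φ (a s - Γ s ω)))
        + 2⁻¹ * (∫ s in Icc (0:ℝ) t, (L (b s) (derivWithin b (Icc (0:ℝ) t) s)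
              + ∫ ω in Ioo (0:ℝ) 1, Φ (b s - Γ s ω))) := by
    rw [integral_add (((hInt a ha)).const_mul _) (((hInt b hb)).const_mul _),
      integral_const_mul, integral_const_mul]
  -- Ψ term comparison
  have hΨmono :
      (∫ ω in Ioo (0:ℝ) 1, Ψ (m 0 - Γ 0 ω))
        ≤ 2⁻¹ * (∫ ω in Ioo (0:ℝ) 1, Ψ (a 0 - Γ 0 ω))
          + 2⁻¹ * (∫ ω in Ioo (0:ℝ) 1, Ψ (b 0 - Γ 0 ω)) := by
    have hia := pot_integrable Ψ hΨ Γ hΓm hΓb (a 0) 0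
    have hib := pot_integrable Ψ hΨ Γ hΓm hΓb (b 0) 0
    have him := pot_integrable Ψ hΨ Γ hΓm hΓb (m 0) 0
    have hpt : ∀ ω ∈ Ioo (0:ℝ) 1,
        Ψ (m 0 - Γ 0 ω) ≤ 2⁻¹ * Ψ (a 0 - Γ 0 ω) + 2⁻¹ * Ψ (b 0 - Γ 0 ω) := by
      intro ω _
      have hcv := hΨconv.2 (mem_univ (a 0 - Γ 0 ω)) (mem_univ (b 0 - Γ 0 ω))
        (by norm_num : (0:ℝ) ≤ 2⁻¹) (by norm_num : (0:ℝ) ≤ 2⁻¹)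
        (by norm_num : (2⁻¹:ℝ) + 2⁻¹ = 1)
      have hms : m 0 - Γ 0 ω
          = (2⁻¹:ℝ) • (a 0 - Γ 0 ω) + (2⁻¹:ℝ) • (b 0 - Γ 0 ω) := by
        simp only [hm_def]
        module
      rw [hms]
      simpa using hcv
    calc (∫ ω in Ioo (0:ℝ) 1, Ψ (m 0 - Γ 0 ω))
        ≤ ∫ ω in Ioo (0:ℝ) 1, (2⁻¹ * Ψ (a 0 - Γ 0 ω) + 2⁻¹ * Ψ (b 0 - Γ 0 ω)) :=
          setIntegral_mono_on him ((hia.const_mul _).add (hib.const_mul _))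
            measurableSet_Ioo hpt
      _ = 2⁻¹ * (∫ ω in Ioo (0:ℝ) 1, Ψ (a 0 - Γ 0 ω))
          + 2⁻¹ * (∫ ω in Ioo (0:ℝ) 1, Ψ (b 0 - Γ 0 ω)) := by
          rw [integral_add (hia.const_mul _) (hib.const_mul _),
            integral_const_mul, integral_const_mul]
  show indivCost d t L Φ Ψ Γ m ≤ _
  unfold indivCost
  rw [hsplit] at hmono
  linarith

end Aux

/-- Midpoint concavity bound from below: if `L` is jointly convex and `Φ`, `Ψ` are convex,
and the infima defining `û(t,q+h)` and `û(t,q−h)` are attained, then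
`û(t,q+h) + û(t,q−h) ≥ 2û(t,q)`. -/
theorem uhat_second_difference_lower_bound
    (d : ℕ) (hd : 1 ≤ d)
    (L : EuclideanSpace ℝ (Fin d) → EuclideanSpace ℝ (Fin d) → ℝ)
    (Φ Ψ : EuclideanSpace ℝ (Fin d) → ℝ)
    (Γ : ℝ → ℝ → EuclideanSpace ℝ (Fin d))
    (T t : ℝ) (ht : 0 < t) (htT : t ≤ T)
    -- `L`, `Φ`, `Ψ` continuous; `Φ`, `Ψ` even and bounded below
    (hL : Continuous (fun p : EuclideanSpace ℝ (Fin d) × EuclideanSpace ℝ (Fin d) => L p.1 p.2))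
    (hΦ : Continuous Φ) (hΨ : Continuous Ψ)
    (hΦe : ∀ x, Φ (-x) = Φ x) (hΨe : ∀ x, Ψ (-x) = Ψ x)
    (hΦb : BddBelow (range Φ)) (hΨb : BddBelow (range Ψ))
    -- `Γ` is jointly measurable, bounded, continuous in time
    (hΓm : Measurable (fun p : ℝ × ℝ => Γ p.1 p.2))
    (hΓb : ∃ C, ∀ s ω, ‖Γ s ω‖ ≤ C)
    (hΓc : ∀ ω, Continuous (fun s => Γ s ω))
    (q h : EuclideanSpace ℝ (Fin d))
    -- `L` jointly convex, `Φ` and `Ψ` convex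
    (hLconv : ConvexOn ℝ univ
      (fun p : EuclideanSpace ℝ (Fin d) × EuclideanSpace ℝ (Fin d) => L p.1 p.2))
    (hΦconv : ConvexOn ℝ univ Φ) (hΨconv : ConvexOn ℝ univ Ψ)
    -- the infima defining `û(t,q+h)` and `û(t,q−h)` are attained by `C¹` paths
    (hattainPlus : ∃ r : ℝ → EuclideanSpace ℝ (Fin d),
      ContDiffOn ℝ 1 r (Icc (0:ℝ) t) ∧ r t = q + h ∧
        indivCost d t L Φ Ψ Γ r = uhat d t L Φ Ψ Γ (q + h))
    (hattainMinus : ∃ r : ℝ → EuclideanSpace ℝ (Fin d),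
      ContDiffOn ℝ 1 r (Icc (0:ℝ) t) ∧ r t = q - h ∧
        indivCost d t L Φ Ψ Γ r = uhat d t L Φ Ψ Γ (q - h)) :
    2 * uhat d t L Φ Ψ Γ q ≤ uhat d t L Φ Ψ Γ (q + h) + uhat d t L Φ Ψ Γ (q - h) := by
  obtain ⟨ra, hca, hra, hea⟩ := hattainPlus
  obtain ⟨rb, hcb, hrb, heb⟩ := hattainMinus
  by_cases hB : BddBelow {c : ℝ | ∃ r : ℝ → EuclideanSpace ℝ (Fin d),
      ContDiffOn ℝ 1 r (Icc (0:ℝ) t) ∧ r t = q ∧ indivCost d t L Φ Ψ Γ r = c}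
  · -- the set defining `û(t,q)` is bounded below: use the midpoint path
    have key := cost_mid_le L Φ Ψ Γ ht hL hΦ hΨ hΓm hΓb hΓc hLconv hΦconv hΨconv hca hcb
    have hmem : indivCost d t L Φ Ψ Γ (fun s => (2⁻¹:ℝ) • (ra s + rb s))
        ∈ {c : ℝ | ∃ r : ℝ → EuclideanSpace ℝ (Fin d),
          ContDiffOn ℝ 1 r (Icc (0:ℝ) t) ∧ r t = q ∧ indivCost d t L Φ Ψ Γ r = c} := by
      refine ⟨_, (hca.add hcb).const_smul (2⁻¹:ℝ), ?_, rfl⟩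
      rw [hra, hrb]
      module
    have h1 : uhat d t L Φ Ψ Γ q
        ≤ indivCost d t L Φ Ψ Γ (fun s => (2⁻¹:ℝ) • (ra s + rb s)) := csInf_le hB hmem
    rw [hea, heb] at key
    linarith
  · -- otherwise all three values are `0`
    have h0 : uhat d t L Φ Ψ Γ q = 0 := Real.sInf_of_not_bddBelow hB
    rw [not_bddBelow_iff] at hB
    have hside : ∀ v w : EuclideanSpace ℝ (Fin d),
        (2⁻¹:ℝ) • (q + v) = w →
        ¬ BddBelow {c : ℝ | ∃ r : ℝ → EuclideanSpace ℝ (Fin d),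
          ContDiffOn ℝ 1 r (Icc (0:ℝ) t) ∧ r t = w ∧ indivCost d t L Φ Ψ Γ r = c} := by
      intro v w hw
      rw [not_bddBelow_iff]
      intro x
      set K := indivCost d t L Φ Ψ Γ (fun _ => v) with hK
      obtain ⟨c, ⟨ρ, hρ1, hρ2, hρ3⟩, hc⟩ := hB (2 * x - K)
      refine ⟨indivCost d t L Φ Ψ Γ (fun s => (2⁻¹:ℝ) • (ρ s + v)),
        ⟨_, (hρ1.add contDiffOn_const).const_smul (2⁻¹:ℝ), by rw [hρ2]; exact hw, rfl⟩, ?_⟩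
      have key := cost_mid_le (a := ρ) (b := fun _ => v)
        L Φ Ψ Γ ht hL hΦ hΨ hΓm hΓb hΓc hLconv hΦconv hΨconv hρ1 contDiffOn_const
      rw [hρ3] at key
      rw [← hK] at key
      linarith
    have hp : uhat d t L Φ Ψ Γ (q + h) = 0 :=
      Real.sInf_of_not_bddBelow (hside (q + (2:ℝ) • h) (q + h) (by module))
    have hm : uhat d t L Φ Ψ Γ (q - h) = 0 :=
      Real.sInf_of_not_bddBelow (hside (q - (2:ℝ) • h) (q - h) (by module))
    rw [h0, hp, hm]
    norm_num
end

section
/- Fix 0 < t ≤ T and q ∈ ℝ^d. Let u : ℝ × ℝ^d → ℝ be C¹ and let r : [0,t] → ℝ^d be C¹ with r(t) = q. Assume: (i) for every τ ∈ [0,t], u(τ, r(τ)) = ∫₀^τ [ L(r(s), ṙ(s)) + ∫_Ω Φ(r(s) − Γ(s,ω̃)) dω̃ ] ds + ∫_Ω Ψ(r(0) − Γ(0,ω̃)) dω̃; (ii) ∇_q u(t, r(t)) = ∇_v L(r(t), ṙ(t)); (iii) H : ℝ^d × ℝ^d → ℝ satisfies L(q', v) + H(q', ∇_v L(q', v)) =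 ⟨v, ∇_v L(q', v)⟩ for all q', v ∈ ℝ^d. Then u satisfies the Hamilton–Jacobi equation at (t,q): ∂_t u(t, q) + H(q, ∇_q u(t, q)) − ∫_Ω Φ(q − Γ(t,ω̃)) dω̃ = 0. -/
open MeasureTheory Set Topology
open scoped RealInnerProductSpace

/-- If `u` is `C¹`, `r` is a `C¹` path with `r(t) = q` along which the value identity (i)
holds, the gradient identity (ii) `∇_q u(t,r(t)) = ∇_v L(r(t),ṙ(t))` holds, and `H` satisfies
the Legendre identity (iii), then `u` satisfies the Hamilton–Jacobi equation at `(t,q)`: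
`∂_t u(t,q) + H(q, ∇_q u(t,q)) − ∫_Ω Φ(q − Γ(t,ω̃)) dω̃ = 0`. -/
theorem hamilton_jacobi_at_terminal_point
    (d : ℕ) (hd : 1 ≤ d)
    (L : EuclideanSpace ℝ (Fin d) → EuclideanSpace ℝ (Fin d) → ℝ)
    (Φ Ψ : EuclideanSpace ℝ (Fin d) → ℝ)
    (Γ : ℝ → ℝ → EuclideanSpace ℝ (Fin d))
    (T t : ℝ) (ht : 0 < t) (htT : t ≤ T)
    -- `L`, `Φ`, `Ψ` are `C³`; `Φ`, `Ψ` even with bounded derivatives of order 1,2,3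
    (hL : ContDiff ℝ 3 (fun p : EuclideanSpace ℝ (Fin d) × EuclideanSpace ℝ (Fin d) => L p.1 p.2))
    (hΦ : ContDiff ℝ 3 Φ) (hΨ : ContDiff ℝ 3 Ψ)
    (hΦe : ∀ x, Φ (-x) = Φ x) (hΨe : ∀ x, Ψ (-x) = Ψ x)
    (hΦd : ∀ i, 1 ≤ i → i ≤ 3 → ∃ C, ∀ x, ‖iteratedFDeriv ℝ i Φ x‖ ≤ C)
    (hΨd : ∀ i, 1 ≤ i → i ≤ 3 → ∃ C, ∀ x, ‖iteratedFDeriv ℝ i Ψ x‖ ≤ C)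
    -- `Γ` is jointly measurable, bounded, continuous in time
    (hΓm : Measurable (fun p : ℝ × ℝ => Γ p.1 p.2))
    (hΓb : ∃ C, ∀ s ω, ‖Γ s ω‖ ≤ C)
    (hΓc : ∀ ω, Continuous (fun s => Γ s ω))
    (q : EuclideanSpace ℝ (Fin d))
    (H : EuclideanSpace ℝ (Fin d) → EuclideanSpace ℝ (Fin d) → ℝ)
    (u : ℝ → EuclideanSpace ℝ (Fin d) → ℝ)
    (hu : ContDiff ℝ 1 (fun p : ℝ × EuclideanSpace ℝ (Fin d) => u p.1 p.2))
    (r : ℝ → EuclideanSpace ℝ (Fin d))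
    (hr : ContDiffOn ℝ 1 r (Icc 0 t)) (hrt : r t = q)
    -- (i) the value identity along `r`
    (hval : ∀ τ ∈ Icc (0:ℝ) t,
      u τ (r τ) =
        (∫ s in Icc (0:ℝ) τ,
            (L (r s) (derivWithin r (Icc (0:ℝ) t) s)
              + ∫ ω in Ioo (0:ℝ) 1, Φ (r s - Γ s ω)))
          + ∫ ω in Ioo (0:ℝ) 1, Ψ (r 0 - Γ 0 ω))
    -- (ii) `∇_q u(t, r(t)) = ∇_v L(r(t), ṙ(t))`
    (hgrad : gradient (u t) (r t) =
      gradient (fun v => L (r t) v) (derivWithin r (Icc (0:ℝ) t) t))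
    -- (iii) the Legendre identity for `H`
    (hLegendre : ∀ q' v : EuclideanSpace ℝ (Fin d),
      L q' v + H q' (gradient (fun v' => L q' v') v) =
        ⟪v, gradient (fun v' => L q' v') v⟫) :
    deriv (fun s => u s q) t + H q (gradient (u t) q)
      - (∫ ω in Ioo (0:ℝ) 1, Φ (q - Γ t ω)) = 0 := by
  classical
  have htmem : t ∈ Icc (0:ℝ) t := ⟨ht.le, le_rfl⟩
  set v : EuclideanSpace ℝ (Fin d) := derivWithin r (Icc (0:ℝ) t) t with hv
  set U : ℝ × EuclideanSpace ℝ (Fin d) → ℝ := fun p => u p.1 p.2 with hU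
  have hUd : Differentiable ℝ U := hu.differentiable one_ne_zero
  set A : ℝ × EuclideanSpace ℝ (Fin d) →L[ℝ] ℝ := fderiv ℝ U (t, q) with hA
  have hUA : HasFDerivAt U A (t, q) := (hUd (t, q)).hasFDerivAt
  -- time derivative of u at (t,q)
  have h1 : HasDerivAt (fun s : ℝ => u s q) (A (1, (0:EuclideanSpace ℝ (Fin d)))) t := by
    have hp : HasDerivAt (fun s : ℝ => ((s, q) : ℝ × EuclideanSpace ℝ (Fin d))) ((1:ℝ), (0:EuclideanSpace ℝ (Fin d))) t :=
      (hasDerivAt_id t).prodMk (hasDerivAt_const t q)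
    exact hUA.comp_hasDerivAt t hp
  -- spatial derivative / gradient of u t at q
  set B : EuclideanSpace ℝ (Fin d) →L[ℝ] ℝ × EuclideanSpace ℝ (Fin d) :=
    (0 : EuclideanSpace ℝ (Fin d) →L[ℝ] ℝ).prod (ContinuousLinearMap.id ℝ (EuclideanSpace ℝ (Fin d))) with hB
  have hut : HasFDerivAt (u t) (A.comp B) q := by
    have h0 : HasFDerivAt (fun x : EuclideanSpace ℝ (Fin d) => ((t, x) : ℝ × EuclideanSpace ℝ (Fin d))) B q :=
      (hasFDerivAt_const t q).prodMk (hasFDerivAt_id q)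
    exact hUA.comp q h0
  have hgradval : ∀ w : EuclideanSpace ℝ (Fin d), ⟪gradient (u t) q, w⟫ = A (0, w) := by
    intro w
    rw [gradient, InnerProductSpace.toDual_symm_apply, hut.fderiv]
    simp [hB]
  -- derivative of τ ↦ u τ (r τ) within Icc 0 t at t
  have hrd : HasDerivWithinAt r v (Icc 0 t) t :=
    ((hr.differentiableOn one_ne_zero) t htmem).hasDerivWithinAt
  have hγ : HasDerivWithinAt (fun τ => ((τ, r τ) : ℝ × EuclideanSpace ℝ (Fin d))) ((1:ℝ), v) (Icc 0 t) t :=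
    (hasDerivWithinAt_id t _).prodMk hrd
  have hUA' : HasFDerivAt U A (t, r t) := by rw [hrt]; exact hUA
  have hF : HasDerivWithinAt (fun τ => u τ (r τ)) (A (1, v)) (Icc 0 t) t :=
    (hUA'.comp_hasDerivWithinAt t hγ :)
  -- the integrand g and its continuity on Icc 0 t
  set g : ℝ → ℝ := fun s =>
    L (r s) (derivWithin r (Icc (0:ℝ) t) s) + ∫ ω in Ioo (0:ℝ) 1, Φ (r s - Γ s ω) with hg
  -- bound on Φ
  obtain ⟨Cφ, hCφ⟩ := hΦd 1 le_rfl (by norm_num)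
  have hfd : ∀ x, ‖fderiv ℝ Φ x‖ ≤ Cφ := by
    intro x
    calc ‖fderiv ℝ Φ x‖ = ‖iteratedFDeriv ℝ 0 (fderiv ℝ Φ) x‖ := by
          rw [norm_iteratedFDeriv_zero]
      _ = ‖iteratedFDeriv ℝ (0+1) Φ x‖ := norm_iteratedFDeriv_fderiv
      _ = ‖iteratedFDeriv ℝ 1 Φ x‖ := by rw [zero_add]
      _ ≤ Cφ := hCφ x
  have hCφ0 : 0 ≤ Cφ := le_trans (norm_nonneg _) (hfd 0)
  have hΦdiff : Differentiable ℝ Φ := hΦ.differentiable (by norm_num)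
  have hΦlip : ∀ x : EuclideanSpace ℝ (Fin d), ‖Φ x - Φ 0‖ ≤ Cφ * ‖x‖ := by
    intro x
    have := Convex.norm_image_sub_le_of_norm_fderiv_le
      (f := Φ) (s := (univ : Set (EuclideanSpace ℝ (Fin d)))) (fun z _ => hΦdiff z) (fun z _ => hfd z)
      convex_univ (mem_univ 0) (mem_univ x)
    simpa using this
  obtain ⟨Cγ, hCγ⟩ := hΓb
  obtain ⟨Mr, hMr⟩ := isCompact_Icc.exists_bound_of_continuousOn (hr.continuousOn)
  set Bd : ℝ := ‖Φ 0‖ + Cφ * (Mr + Cγ) with hBd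
  have hbound : ∀ s ∈ Icc (0:ℝ) t, ∀ ω : ℝ, ‖Φ (r s - Γ s ω)‖ ≤ Bd := by
    intro s hs ω
    have h1' : ‖Φ (r s - Γ s ω)‖ ≤ ‖Φ 0‖ + Cφ * ‖r s - Γ s ω‖ := by
      have := hΦlip (r s - Γ s ω)
      calc ‖Φ (r s - Γ s ω)‖ = ‖Φ 0 + (Φ (r s - Γ s ω) - Φ 0)‖ := by ring_nf
        _ ≤ ‖Φ 0‖ + ‖Φ (r s - Γ s ω) - Φ 0‖ := norm_add_le _ _
        _ ≤ ‖Φ 0‖ + Cφ * ‖r s - Γ s ω‖ := by linarith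
    have h2' : ‖r s - Γ s ω‖ ≤ Mr + Cγ :=
      le_trans (norm_sub_le _ _) (add_le_add (hMr s hs) (hCγ s ω))
    have := mul_le_mul_of_nonneg_left h2' hCφ0
    rw [hBd]; linarith
  have hmeasω : ∀ s : ℝ, AEStronglyMeasurable (fun ω => Φ (r s - Γ s ω))
      (volume.restrict (Ioo (0:ℝ) 1)) := by
    intro s
    have hΓs : Measurable fun ω : ℝ => Γ s ω :=
      hΓm.comp (measurable_const.prodMk measurable_id)
    exact (hΦ.continuous.measurable.comp (measurable_const.sub hΓs)).aestronglyMeasurable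
  have hJ : ContinuousOn (fun s => ∫ ω in Ioo (0:ℝ) 1, Φ (r s - Γ s ω)) (Icc 0 t) := by
    intro s₀ hs₀
    apply continuousWithinAt_of_dominated (bound := fun _ => Bd)
    · exact Filter.Eventually.of_forall fun s => hmeasω s
    · filter_upwards [self_mem_nhdsWithin] with s hs
      exact Filter.Eventually.of_forall fun ω => hbound s hs ω
    · refine (integrableOn_const_iff).2 (Or.inr ?_)
      rw [Real.volume_Ioo]; norm_num
    · refine Filter.Eventually.of_forall fun ω => ?_
      exact hΦ.continuous.continuousAt.comp_continuousWithinAt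
        (((hr.continuousOn s₀ hs₀)).sub ((hΓc ω).continuousWithinAt))
  have hderiv' : ContinuousOn (derivWithin r (Icc (0:ℝ) t)) (Icc 0 t) :=
    hr.continuousOn_derivWithin (uniqueDiffOn_Icc ht) le_rfl
  have hLpart : ContinuousOn
      (fun s => L (r s) (derivWithin r (Icc (0:ℝ) t) s)) (Icc 0 t) :=
    hL.continuous.comp_continuousOn ((hr.continuousOn).prodMk hderiv')
  have hgcont : ContinuousOn g (Icc 0 t) := hLpart.add hJ
  -- FTC
  have hgint : IntervalIntegrable g volume 0 t := by
    apply ContinuousOn.intervalIntegrable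
    rwa [uIcc_of_le ht.le]
  have hmeasg : StronglyMeasurableAtFilter g (𝓝[Iic t] t) volume := by
    refine ⟨Icc 0 t, ?_, hgcont.aestronglyMeasurable measurableSet_Icc⟩
    rw [mem_nhdsWithin]
    exact ⟨Ioi 0, isOpen_Ioi, ht, fun x hx => ⟨le_of_lt hx.1, hx.2⟩⟩
  have hgct : ContinuousWithinAt g (Iic t) t := by
    have h := hgcont t htmem
    rwa [ContinuousWithinAt, nhdsWithin_Icc_eq_nhdsLE ht] at h
  have hG : HasDerivWithinAt (fun τ => ∫ x in (0:ℝ)..τ, g x) (g t) (Iic t) t :=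
    intervalIntegral.integral_hasDerivWithinAt_right hgint hmeasg hgct
  set c : ℝ := ∫ ω in Ioo (0:ℝ) 1, Ψ (r 0 - Γ 0 ω) with hc
  have hG' : HasDerivWithinAt (fun τ => (∫ x in (0:ℝ)..τ, g x) + c) (g t) (Icc 0 t) t :=
    ((hG.mono Icc_subset_Iic_self)).add_const c
  have hIcceq : ∀ τ ∈ Icc (0:ℝ) t, (∫ s in Icc (0:ℝ) τ, g s) = ∫ x in (0:ℝ)..τ, g x := by
    intro τ hτ
    rw [intervalIntegral.integral_of_le hτ.1, integral_Icc_eq_integral_Ioc]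
  have hF' : HasDerivWithinAt (fun τ => u τ (r τ)) (g t) (Icc 0 t) t := by
    refine hG'.congr (fun τ hτ => ?_) ?_
    · rw [hval τ hτ, hIcceq τ hτ]
    · rw [hval t htmem, hIcceq t htmem]
  have huniq : A (1, v) = g t := by
    have hud := uniqueDiffOn_Icc ht t htmem
    rw [← hF.derivWithin hud, ← hF'.derivWithin hud]
  -- final algebra
  have hsplit : A (1, v) = A (1, (0:EuclideanSpace ℝ (Fin d))) + A (0, v) := by
    rw [← map_add]
    norm_num
  have hderiv_u : deriv (fun s => u s q) t = A (1, (0:EuclideanSpace ℝ (Fin d))) := h1.deriv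
  have hinner : ⟪gradient (u t) q, v⟫ = A (0, v) := hgradval v
  have hgt : g t = L q v + ∫ ω in Ioo (0:ℝ) 1, Φ (q - Γ t ω) := by
    rw [hg]; simp only [hrt]; rfl
  have hp : gradient (u t) q = gradient (fun v' => L q v') v := by
    rw [← hrt]; exact hgrad
  have hLeg := hLegendre q v
  rw [← hp] at hLeg
  have hsym : ⟪v, gradient (u t) q⟫ = ⟪gradient (u t) q, v⟫ := real_inner_comm _ _
  rw [hderiv_u]
  have : A (1, (0:EuclideanSpace ℝ (Fin d))) = g t - A (0, v) := by
    rw [← huniq, hsplit]; ring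
  rw [this, hgt]
  linarith
end
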